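/- arXiv:1905.04177 — 2 statements merged into one kernel-verified Lean document; each statement's English description precedes it below -/
import Mathlib

section
/- Let f_n(x) = ∏_{ℓ=0}^{n−1}(1 − cos(2^{ℓ+1}πx)). For N ≥ n, one has F_N(2^{−n}) := ∫₀^{2^{−n}} f_N(x) dx ≤ 2^{−n} f_n(2^{−n}). -/
noncomputable def tmRiesz (n : ℕ) (x : ℝ) : ℝ :=
  ∏ ℓ ∈ Finset.range n, (1 - Real.cos (2 ^ (ℓ + 1) * Real.pi * x))

lemma tmRiesz_continuous (m : ℕ) : Continuous (tmRiesz m) := by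
  unfold tmRiesz
  exact continuous_finset_prod _ fun ℓ _ => by continuity

lemma tmRiesz_nonneg (m : ℕ) (x : ℝ) : 0 ≤ tmRiesz m x :=
  Finset.prod_nonneg fun ℓ _ => sub_nonneg.mpr (Real.cos_le_one _)

lemma tmRiesz_periodic (m : ℕ) (x : ℝ) : tmRiesz m (x + 1) = tmRiesz m x := by
  unfold tmRiesz
  refine Finset.prod_congr rfl fun ℓ _ => ?_
  have h : (2:ℝ) ^ (ℓ+1) * Real.pi * (x + 1)
      = 2 ^ (ℓ+1) * Real.pi * x + ((2^ℓ : ℤ) : ℝ) * (2 * Real.pi) := by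
    push_cast; ring
  rw [h, Real.cos_add_int_mul_two_pi]

lemma tmRiesz_succ (m : ℕ) (x : ℝ) :
    tmRiesz (m+1) x = (1 - Real.cos (Real.pi * (2 * x))) * tmRiesz m (2 * x) := by
  unfold tmRiesz
  have h : ∀ ℓ : ℕ, (2:ℝ) ^ (ℓ+1) * Real.pi * (2*x) = 2 ^ (ℓ+1+1) * Real.pi * x :=
    fun ℓ => by ring
  simp_rw [h]
  rw [Finset.prod_range_succ']
  rw [show Real.pi * (2*x) = (2:ℝ)^(0+1) * Real.pi * x by ring]
  exact mul_comm _ _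

lemma tmRiesz_integral (m : ℕ) : ∫ x in (0:ℝ)..1, tmRiesz m x = 1 := by
  induction m with
  | zero => simp [tmRiesz]
  | succ m ih =>
    have hmc := tmRiesz_continuous m
    have hcont : Continuous (fun u : ℝ => (1 - Real.cos (Real.pi * u)) * tmRiesz m u) :=
      Continuous.mul (by continuity) hmc
    have hcont2 : Continuous (fun u : ℝ => (1 + Real.cos (Real.pi * u)) * tmRiesz m u) :=
      Continuous.mul (by continuity) hmc
    have h12 : (∫ u in (1:ℝ)..2, (1 - Real.cos (Real.pi * u)) * tmRiesz m u)
        = ∫ v in (0:ℝ)..1, (1 + Real.cos (Real.pi * v)) * tmRiesz m v := by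
      have hc := intervalIntegral.integral_comp_add_right (a := (0:ℝ)) (b := 1)
          (fun u : ℝ => (1 - Real.cos (Real.pi * u)) * tmRiesz m u) 1
      rw [zero_add, show (1:ℝ) + 1 = 2 by norm_num] at hc
      rw [← hc]
      refine intervalIntegral.integral_congr fun v _ => ?_
      show (1 - Real.cos (Real.pi * (v + 1))) * tmRiesz m (v + 1) = _
      rw [tmRiesz_periodic, show Real.pi * (v + 1) = Real.pi * v + Real.pi by ring,
        Real.cos_add_pi]
      ring
    have hsplit : (∫ u in (0:ℝ)..2, (1 - Real.cos (Real.pi * u)) * tmRiesz m u)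
        = (∫ u in (0:ℝ)..1, (1 - Real.cos (Real.pi * u)) * tmRiesz m u)
          + ∫ u in (1:ℝ)..2, (1 - Real.cos (Real.pi * u)) * tmRiesz m u :=
      (intervalIntegral.integral_add_adjacent_intervals
        (hcont.intervalIntegrable _ _) (hcont.intervalIntegrable _ _)).symm
    have hsum : ((∫ u in (0:ℝ)..1, (1 - Real.cos (Real.pi * u)) * tmRiesz m u)
          + ∫ u in (1:ℝ)..2, (1 - Real.cos (Real.pi * u)) * tmRiesz m u)
        = ∫ u in (0:ℝ)..1, 2 * tmRiesz m u := by
      rw [h12, ← intervalIntegral.integral_add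
        (hcont.intervalIntegrable _ _) (hcont2.intervalIntegrable _ _)]
      exact intervalIntegral.integral_congr fun u _ => by ring
    calc ∫ x in (0:ℝ)..1, tmRiesz (m+1) x
        = ∫ x in (0:ℝ)..1,
            (fun u : ℝ => (1 - Real.cos (Real.pi * u)) * tmRiesz m u) (2 * x) :=
          intervalIntegral.integral_congr fun x _ => tmRiesz_succ m x
      _ = (2:ℝ)⁻¹ • ∫ u in (2*(0:ℝ))..(2*1),
            (1 - Real.cos (Real.pi * u)) * tmRiesz m u :=
          by rw [intervalIntegral.integral_comp_mul_left (c := (2:ℝ))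
            (fun u : ℝ => (1 - Real.cos (Real.pi * u)) * tmRiesz m u) two_ne_zero]
      _ = (2:ℝ)⁻¹ * ∫ u in (0:ℝ)..2, (1 - Real.cos (Real.pi * u)) * tmRiesz m u := by
          norm_num
      _ = (2:ℝ)⁻¹ * (2 * ∫ u in (0:ℝ)..1, tmRiesz m u) := by
          rw [hsplit, hsum, intervalIntegral.integral_const_mul]
      _ = 1 := by rw [ih]; norm_num

lemma tmRiesz_split (n m : ℕ) (x : ℝ) :
    tmRiesz (n + m) x = tmRiesz n x * tmRiesz m ((2:ℝ)^n * x) := by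
  unfold tmRiesz
  rw [Finset.prod_range_add]
  congr 1
  refine Finset.prod_congr rfl fun ℓ _ => ?_
  have h : (2:ℝ) ^ (n + ℓ + 1) * Real.pi * x = 2 ^ (ℓ+1) * Real.pi * ((2:ℝ)^n * x) := by
    rw [show n + ℓ + 1 = (ℓ + 1) + n by ring, pow_add]
    ring
  rw [h]

lemma tmRiesz_mono (n : ℕ) {x y : ℝ} (hx : 0 ≤ x) (hxy : x ≤ y)
    (hy : y ≤ (2:ℝ)^(-(n:ℤ))) : tmRiesz n x ≤ tmRiesz n y := by
  unfold tmRiesz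
  apply Finset.prod_le_prod
  · intro ℓ _; exact sub_nonneg.mpr (Real.cos_le_one _)
  · intro ℓ hℓ
    have hℓn : ℓ + 1 ≤ n := Finset.mem_range.mp hℓ
    have hyπ : (2:ℝ)^(ℓ+1) * Real.pi * y ≤ Real.pi := by
      have h1 : (2:ℝ)^(ℓ+1) * y ≤ 1 := by
        have heq : (2:ℝ)^(ℓ+1) * (2:ℝ)^(-(n:ℤ)) = (2:ℝ)^(((ℓ+1 : ℕ):ℤ) + (-(n:ℤ))) := by
          rw [← zpow_natCast (2:ℝ) (ℓ+1), ← zpow_add₀ (two_ne_zero)]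
        calc (2:ℝ)^(ℓ+1) * y ≤ (2:ℝ)^(ℓ+1) * (2:ℝ)^(-(n:ℤ)) := by
              gcongr
          _ = (2:ℝ)^(((ℓ+1 : ℕ):ℤ) + (-(n:ℤ))) := heq
          _ ≤ (2:ℝ)^(0:ℤ) := by
              apply zpow_le_zpow_right₀ (by norm_num)
              omega
          _ = 1 := by norm_num
      nlinarith [Real.pi_pos]
    have harg : (2:ℝ)^(ℓ+1) * Real.pi * x ≤ (2:ℝ)^(ℓ+1) * Real.pi * y := by
      have hpos : (0:ℝ) ≤ (2:ℝ)^(ℓ+1) * Real.pi := by positivity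
      nlinarith
    have hxnn : (0:ℝ) ≤ (2:ℝ)^(ℓ+1) * Real.pi * x := by positivity
    have := Real.cos_le_cos_of_nonneg_of_le_pi hxnn hyπ harg
    linarith

theorem tmRiesz_upper_bound (n N : ℕ) (hnN : n ≤ N) :
    ∫ x in (0:ℝ)..((2:ℝ) ^ (-(n : ℤ))), tmRiesz N x
      ≤ (2:ℝ) ^ (-(n : ℤ)) * tmRiesz n ((2:ℝ) ^ (-(n : ℤ))) := by
  set a : ℝ := (2:ℝ) ^ (-(n : ℤ)) with ha
  have ha0 : 0 < a := by positivity
  obtain ⟨m, rfl⟩ : ∃ m, N = n + m := ⟨N - n, by omega⟩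
  have h2na : (2:ℝ)^n * a = 1 := by
    rw [ha, ← zpow_natCast (2:ℝ) n, ← zpow_add₀ (two_ne_zero)]
    simp
  have hineq : ∫ x in (0:ℝ)..a, tmRiesz (n + m) x
      ≤ ∫ x in (0:ℝ)..a, tmRiesz n a * tmRiesz m ((2:ℝ)^n * x) := by
    apply intervalIntegral.integral_mono_on ha0.le
    · exact ((tmRiesz_continuous _).intervalIntegrable _ _)
    · exact ((continuous_const.mul ((tmRiesz_continuous m).comp
        (continuous_const.mul continuous_id))).intervalIntegrable _ _)
    · intro x hx
      rw [tmRiesz_split n m x]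
      exact mul_le_mul_of_nonneg_right
        (tmRiesz_mono n hx.1 hx.2 le_rfl) (tmRiesz_nonneg _ _)
  have hint : ∫ x in (0:ℝ)..a, tmRiesz m ((2:ℝ)^n * x) = a := by
    rw [intervalIntegral.integral_comp_mul_left (tmRiesz m)
      (by positivity : (2:ℝ)^n ≠ 0), mul_zero, h2na, tmRiesz_integral,
      smul_eq_mul, mul_one, ha, ← zpow_natCast (2:ℝ) n, ← zpow_neg]
  calc ∫ x in (0:ℝ)..a, tmRiesz (n + m) x
      ≤ ∫ x in (0:ℝ)..a, tmRiesz n a * tmRiesz m ((2:ℝ)^n * x) := hineq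
    _ = tmRiesz n a * ∫ x in (0:ℝ)..a, tmRiesz m ((2:ℝ)^n * x) := by
        rw [intervalIntegral.integral_const_mul]
    _ = tmRiesz n a * a := by rw [hint]
    _ = a * tmRiesz n a := mul_comm _ _
end

section
/- Let f_n(x) = ∏_{ℓ=0}^{n−1}(1 − cos(2^{ℓ+1}πx)). For N ≥ n, one has F_N(2^{−n}) := ∫₀^{2^{−n}} f_N(x) dx ≥ 2^{−n} f_n(2^{−n−1}). -/
open Real Finset intervalIntegral

lemma tm_nonneg (n : ℕ) (x : ℝ) : 0 ≤ tmRiesz n x :=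
  Finset.prod_nonneg fun ℓ _ => by
    have := Real.cos_le_one (2 ^ (ℓ + 1) * Real.pi * x); linarith

lemma tm_continuous (n : ℕ) : Continuous (tmRiesz n) := by
  unfold tmRiesz
  exact continuous_finset_prod _ fun ℓ _ => by fun_prop

lemma tm_succ' (n : ℕ) (x : ℝ) :
    tmRiesz (n + 1) x = (1 - Real.cos (2 * Real.pi * x)) * tmRiesz n (2 * x) := by
  unfold tmRiesz
  rw [Finset.prod_range_succ']
  rw [mul_comm]
  congr 1
  · norm_num
  · exact Finset.prod_congr rfl fun ℓ _ => by rw [show (2:ℝ) ^ (ℓ + 1 + 1) * Real.pi * x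
      = 2 ^ (ℓ + 1) * Real.pi * (2 * x) by ring]

lemma tm_add (n k : ℕ) (x : ℝ) :
    tmRiesz (n + k) x = tmRiesz n x * tmRiesz k (2 ^ n * x) := by
  unfold tmRiesz
  rw [Finset.prod_range_add]
  congr 1
  exact Finset.prod_congr rfl fun ℓ _ => by rw [show (2:ℝ) ^ (n + ℓ + 1) * Real.pi * x
      = 2 ^ (ℓ + 1) * Real.pi * (2 ^ n * x) by rw [pow_add, pow_add]; ring]

lemma tm_periodic (k : ℕ) (x : ℝ) : tmRiesz k (x + 1) = tmRiesz k x := by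
  unfold tmRiesz
  refine Finset.prod_congr rfl fun ℓ _ => ?_
  have : (2:ℝ) ^ (ℓ + 1) * Real.pi * (x + 1)
      = 2 ^ (ℓ + 1) * Real.pi * x + (2 ^ ℓ : ℤ) * (2 * Real.pi) := by
    push_cast; ring
  rw [this, Real.cos_add_int_mul_two_pi]

lemma tm_reflect (k : ℕ) (u : ℝ) : tmRiesz k (1 - u) = tmRiesz k u := by
  unfold tmRiesz
  refine Finset.prod_congr rfl fun ℓ _ => ?_
  have : (2:ℝ) ^ (ℓ + 1) * Real.pi * (1 - u)
      = (2 ^ ℓ : ℤ) * (2 * Real.pi) - 2 ^ (ℓ + 1) * Real.pi * u := by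
    push_cast; ring
  rw [this, Real.cos_int_mul_two_pi_sub]

lemma tm_monotoneOn (n : ℕ) :
    MonotoneOn (tmRiesz n) (Set.Icc 0 ((2:ℝ) ^ (-(n : ℤ)))) := by
  intro a ha b hb hab
  unfold tmRiesz
  refine Finset.prod_le_prod (fun ℓ _ => ?_) (fun ℓ hℓ => ?_)
  · have := Real.cos_le_one (2 ^ (ℓ + 1) * Real.pi * a); linarith
  · have hℓn : ℓ + 1 ≤ n := Finset.mem_range.1 hℓ
    have hpi := Real.pi_pos
    have hb2 : (2:ℝ) ^ (ℓ + 1) * b ≤ 1 := by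
      have h1 : b ≤ (2:ℝ) ^ (-(n : ℤ)) := hb.2
      have h2 : (2:ℝ) ^ (ℓ + 1) * (2:ℝ) ^ (-(n : ℤ)) ≤ 1 := by
        rw [← zpow_natCast (2:ℝ) (ℓ + 1), ← zpow_add₀ (by norm_num : (2:ℝ) ≠ 0)]
        have : ((ℓ : ℤ) + 1) + -(n : ℤ) ≤ 0 := by omega
        calc (2:ℝ) ^ (((ℓ:ℤ) + 1) + -(n : ℤ)) ≤ (2:ℝ) ^ (0:ℤ) :=
              zpow_le_zpow_right₀ (by norm_num) this
          _ = 1 := by norm_num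
      have hpow : (0:ℝ) < 2 ^ (ℓ + 1) := by positivity
      calc (2:ℝ) ^ (ℓ + 1) * b ≤ (2:ℝ) ^ (ℓ + 1) * (2:ℝ) ^ (-(n : ℤ)) := by
            exact mul_le_mul_of_nonneg_left h1 hpow.le
        _ ≤ 1 := h2
    have harg : 2 ^ (ℓ + 1) * Real.pi * b ≤ Real.pi := by nlinarith
    have h0 : 0 ≤ 2 ^ (ℓ + 1) * Real.pi * a := by
      have := ha.1; positivity
    have hab' : 2 ^ (ℓ + 1) * Real.pi * a ≤ 2 ^ (ℓ + 1) * Real.pi * b :=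
      mul_le_mul_of_nonneg_left hab (by positivity)
    have := Real.cos_le_cos_of_nonneg_of_le_pi h0 harg hab'
    linarith


lemma tm_sigma_le_one (n : ℕ) : (2:ℝ) ^ (-(n : ℤ)) ≤ 1 := by
  calc (2:ℝ) ^ (-(n:ℤ)) ≤ (2:ℝ) ^ (0:ℤ) := zpow_le_zpow_right₀ (by norm_num) (by omega)
    _ = 1 := by norm_num

lemma tm_half (n : ℕ) : (2:ℝ) ^ (-(n : ℤ) - 1) = (2:ℝ) ^ (-(n : ℤ)) / 2 := by
  rw [zpow_sub₀ (by norm_num : (2:ℝ) ≠ 0)]; norm_num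

lemma tm_chebyshev_half (n : ℕ)
    (IH : ∀ t ∈ Set.Icc (0:ℝ) ((2:ℝ) ^ (-(n : ℤ))),
      2 * tmRiesz n ((2:ℝ) ^ (-(n : ℤ) - 1)) ≤ tmRiesz n t + tmRiesz n ((2:ℝ) ^ (-(n : ℤ)) - t))
    (u v : ℝ) (hu : u ∈ Set.Icc (0:ℝ) ((2:ℝ) ^ (-(n : ℤ))))
    (hv : v ∈ Set.Icc (0:ℝ) ((2:ℝ) ^ (-(n : ℤ)))) (huv : u + v = (2:ℝ) ^ (-(n : ℤ)))
    (hle : u ≤ v) :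
    2 * ((1 - Real.cos (Real.pi * ((2:ℝ) ^ (-(n : ℤ) - 1)))) * tmRiesz n ((2:ℝ) ^ (-(n : ℤ) - 1)))
      ≤ (1 - Real.cos (Real.pi * u)) * tmRiesz n u
        + (1 - Real.cos (Real.pi * v)) * tmRiesz n v := by
  set σ := (2:ℝ) ^ (-(n : ℤ)) with hσdef
  set m := (2:ℝ) ^ (-(n : ℤ) - 1) with hmdef
  have hσ1 : σ ≤ 1 := tm_sigma_le_one n
  have hσ0 : 0 < σ := by positivity
  have hm : m = σ / 2 := tm_half n
  have hpi := Real.pi_pos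
  -- f facts
  have hfu : 0 ≤ tmRiesz n u := tm_nonneg n u
  have hfv : 0 ≤ tmRiesz n v := tm_nonneg n v
  have hfm : 0 ≤ tmRiesz n m := tm_nonneg n m
  have hfmono : tmRiesz n u ≤ tmRiesz n v := tm_monotoneOn n hu hv hle
  have hIH : 2 * tmRiesz n m ≤ tmRiesz n u + tmRiesz n v := by
    have := IH u hu
    rwa [show σ - u = v by linarith] at this
  -- A facts
  have hAu0 : 0 ≤ 1 - Real.cos (Real.pi * u) := by
    have := Real.cos_le_one (Real.pi * u); linarith
  have hAv0 : 0 ≤ 1 - Real.cos (Real.pi * v) := by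
    have := Real.cos_le_one (Real.pi * v); linarith
  have hAm0 : 0 ≤ 1 - Real.cos (Real.pi * m) := by
    have := Real.cos_le_one (Real.pi * m); linarith
  have hAmono : 1 - Real.cos (Real.pi * u) ≤ 1 - Real.cos (Real.pi * v) := by
    have h1 : Real.cos (Real.pi * v) ≤ Real.cos (Real.pi * u) := by
      apply Real.cos_le_cos_of_nonneg_of_le_pi
      · nlinarith [hu.1]
      · nlinarith [hv.2]
      · nlinarith
    linarith
  have hAmid : 2 * (1 - Real.cos (Real.pi * m)) ≤
      (1 - Real.cos (Real.pi * u)) + (1 - Real.cos (Real.pi * v)) := by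
    have hsum : Real.cos (Real.pi * u) + Real.cos (Real.pi * v)
        = 2 * Real.cos (Real.pi * m) * Real.cos ((Real.pi * u - Real.pi * v) / 2) := by
      rw [Real.cos_add_cos,
        show (Real.pi * u + Real.pi * v) / 2 = Real.pi * m by rw [hm, ← huv]; ring]
    have hcm : 0 ≤ Real.cos (Real.pi * m) := by
      apply Real.cos_nonneg_of_mem_Icc
      constructor
      · nlinarith
      · nlinarith [hm, hσ1]
    have hc1 : Real.cos ((Real.pi * u - Real.pi * v) / 2) ≤ 1 :=
      Real.cos_le_one _
    nlinarith
  -- combine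
  have h1 : 0 ≤ ((1 - Real.cos (Real.pi * v)) - (1 - Real.cos (Real.pi * u)))
      * (tmRiesz n v - tmRiesz n u) := mul_nonneg (by linarith) (by linarith)
  have h2 : (2 * (1 - Real.cos (Real.pi * m))) * (2 * tmRiesz n m)
      ≤ ((1 - Real.cos (Real.pi * u)) + (1 - Real.cos (Real.pi * v)))
        * (tmRiesz n u + tmRiesz n v) :=
    mul_le_mul hAmid hIH (by linarith) (by linarith)
  nlinarith [h1, h2]

lemma tm_midpoint (n : ℕ) :
    ∀ t ∈ Set.Icc (0:ℝ) ((2:ℝ) ^ (-(n : ℤ))),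
      2 * tmRiesz n ((2:ℝ) ^ (-(n : ℤ) - 1))
        ≤ tmRiesz n t + tmRiesz n ((2:ℝ) ^ (-(n : ℤ)) - t) := by
  induction n with
  | zero => intro t _; norm_num [tmRiesz]
  | succ n IH =>
    intro t ht
    have hcast : (-(↑(n+1) : ℤ)) = -(n:ℤ) - 1 := by push_cast; ring
    rw [hcast] at ht ⊢
    set σ := (2:ℝ) ^ (-(n : ℤ)) with hσdef
    have hσ0 : 0 < σ := by positivity
    have hhalf : (2:ℝ) ^ (-(n : ℤ) - 1) = σ / 2 := tm_half n
    have hhalf2 : (2:ℝ) ^ (-(n : ℤ) - 1 - 1) = σ / 2 / 2 := by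
      rw [show -(n:ℤ) - 1 - 1 = (-(n:ℤ) - 1) - 1 by ring,
        zpow_sub₀ (by norm_num : (2:ℝ) ≠ 0), hhalf]; norm_num
    -- rewrite the three tmRiesz (n+1) terms
    have e1 : tmRiesz (n+1) t = (1 - Real.cos (Real.pi * (2*t))) * tmRiesz n (2*t) := by
      rw [tm_succ']; ring_nf
    have e2 : tmRiesz (n+1) ((2:ℝ) ^ (-(n : ℤ) - 1) - t)
        = (1 - Real.cos (Real.pi * (σ - 2*t))) * tmRiesz n (σ - 2*t) := by
      rw [tm_succ', hhalf]
      rw [show 2 * (σ / 2 - t) = σ - 2*t by ring,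
        show 2 * Real.pi * (σ / 2 - t) = Real.pi * (σ - 2*t) by ring]
    have e3 : tmRiesz (n+1) ((2:ℝ) ^ (-(n : ℤ) - 1 - 1))
        = (1 - Real.cos (Real.pi * ((2:ℝ) ^ (-(n : ℤ) - 1)))) * tmRiesz n ((2:ℝ) ^ (-(n : ℤ) - 1)) := by
      rw [tm_succ', hhalf2, hhalf]
      rw [show 2 * (σ / 2 / 2) = σ / 2 by ring,
        show 2 * Real.pi * (σ / 2 / 2) = Real.pi * (σ / 2) by ring]
    rw [e1, e2, e3]
    have ht2 : 2 * t ∈ Set.Icc (0:ℝ) σ := by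
      constructor
      · linarith [ht.1]
      · rw [hhalf] at ht; linarith [ht.2]
    have htσ : σ - 2 * t ∈ Set.Icc (0:ℝ) σ := by
      constructor
      · linarith [ht2.2]
      · linarith [ht2.1]
    rcases le_total (2*t) (σ - 2*t) with h | h
    · exact tm_chebyshev_half n IH (2*t) (σ - 2*t) ht2 htσ (by ring) h
    · have := tm_chebyshev_half n IH (σ - 2*t) (2*t) htσ ht2 (by ring) h
      linarith


lemma tm_integral_one (k : ℕ) : ∫ x in (0:ℝ)..1, tmRiesz k x = 1 := by
  induction k with
  | zero => simp [tmRiesz]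
  | succ k IH =>
    have hcont : Continuous (tmRiesz (k+1)) := tm_continuous _
    have hsplit : ∫ x in (0:ℝ)..1, tmRiesz (k+1) x
        = (∫ x in (0:ℝ)..(1/2:ℝ), tmRiesz (k+1) x)
          + ∫ x in (1/2:ℝ)..1, tmRiesz (k+1) x :=
      (intervalIntegral.integral_add_adjacent_intervals
        (hcont.intervalIntegrable _ _) (hcont.intervalIntegrable _ _)).symm
    have hshift : ∫ x in (1/2:ℝ)..1, tmRiesz (k+1) x
        = ∫ x in (0:ℝ)..(1/2:ℝ), tmRiesz (k+1) (x + 1/2) := by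
      rw [intervalIntegral.integral_comp_add_right (fun x => tmRiesz (k+1) x) (1/2)]
      norm_num
    have hpt : ∀ x : ℝ, tmRiesz (k+1) x + tmRiesz (k+1) (x + 1/2) = 2 * tmRiesz k (2*x) := by
      intro x
      rw [tm_succ', tm_succ',
        show 2 * (x + 1/2) = 2*x + 1 by ring, tm_periodic,
        show 2 * Real.pi * (x + 1/2) = 2 * Real.pi * x + Real.pi by ring, Real.cos_add_pi]
      ring
    have hadd : ∫ x in (0:ℝ)..(1/2:ℝ), (tmRiesz (k+1) x + tmRiesz (k+1) (x+1/2))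
        = (∫ x in (0:ℝ)..(1/2:ℝ), tmRiesz (k+1) x)
          + ∫ x in (0:ℝ)..(1/2:ℝ), tmRiesz (k+1) (x+1/2) :=
      intervalIntegral.integral_add (hcont.intervalIntegrable _ _)
        ((hcont.comp (continuous_id.add continuous_const)).intervalIntegrable _ _)
    have hcomb : ∫ x in (0:ℝ)..(1/2:ℝ), (tmRiesz (k+1) x + tmRiesz (k+1) (x+1/2))
        = ∫ x in (0:ℝ)..(1/2:ℝ), 2 * tmRiesz k (2*x) :=
      intervalIntegral.integral_congr (fun x _ => hpt x)
    have hsub : ∫ x in (0:ℝ)..(1/2:ℝ), 2 * tmRiesz k (2*x) = 1 := by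
      rw [intervalIntegral.integral_const_mul,
        intervalIntegral.integral_comp_mul_left (tmRiesz k) (two_ne_zero)]
      norm_num [IH]
    rw [hsplit, hshift, ← hadd, hcomb, hsub]

theorem tmRiesz_lower_bound (n N : ℕ) (hnN : n ≤ N) :
    (2:ℝ) ^ (-(n : ℤ)) * tmRiesz n ((2:ℝ) ^ (-(n : ℤ) - 1))
      ≤ ∫ x in (0:ℝ)..((2:ℝ) ^ (-(n : ℤ))), tmRiesz N x := by
  obtain ⟨k, rfl⟩ : ∃ k, N = n + k := ⟨N - n, by omega⟩
  set σ := (2:ℝ) ^ (-(n : ℤ)) with hσdef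
  set m := (2:ℝ) ^ (-(n : ℤ) - 1) with hmdef
  have hσ0 : 0 < σ := by positivity
  have h2n : (2:ℝ) ^ n * σ = 1 := by
    rw [hσdef, ← zpow_natCast (2:ℝ) n, ← zpow_add₀ (by norm_num : (2:ℝ) ≠ 0)]
    norm_num
  have key : ∀ x ∈ Set.Icc (0:ℝ) σ,
      2 * tmRiesz n m * tmRiesz k ((2:ℝ)^n * x)
        ≤ tmRiesz (n+k) x + tmRiesz (n+k) (σ - x) := by
    intro x hx
    rw [tm_add, tm_add]
    have hrefl : tmRiesz k ((2:ℝ)^n * (σ - x)) = tmRiesz k ((2:ℝ)^n * x) := by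
      rw [show (2:ℝ)^n * (σ - x) = 1 - (2:ℝ)^n * x by rw [mul_sub, h2n]]
      exact tm_reflect k _
    rw [hrefl]
    have hmid := tm_midpoint n x hx
    nlinarith [tm_nonneg k ((2:ℝ)^n * x)]
  have hcN : Continuous (tmRiesz (n+k)) := tm_continuous _
  have hcT : Continuous (fun x : ℝ => tmRiesz k ((2:ℝ)^n * x)) :=
    (tm_continuous k).comp (continuous_const.mul continuous_id)
  have hmono : ∫ x in (0:ℝ)..σ, 2 * tmRiesz n m * tmRiesz k ((2:ℝ)^n * x)
      ≤ ∫ x in (0:ℝ)..σ, (tmRiesz (n+k) x + tmRiesz (n+k) (σ - x)) :=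
    intervalIntegral.integral_mono_on hσ0.le
      ((continuous_const.mul hcT).intervalIntegrable _ _)
      ((hcN.add (hcN.comp (continuous_const.sub continuous_id))).intervalIntegrable _ _)
      key
  have hT : ∫ x in (0:ℝ)..σ, tmRiesz k ((2:ℝ)^n * x) = σ := by
    rw [intervalIntegral.integral_comp_mul_left (tmRiesz k)
      (pow_ne_zero n (by norm_num : (2:ℝ) ≠ 0)), mul_zero, h2n, tm_integral_one,
      smul_eq_mul, mul_one]
    exact inv_eq_of_mul_eq_one_right h2n
  have hL : ∫ x in (0:ℝ)..σ, 2 * tmRiesz n m * tmRiesz k ((2:ℝ)^n * x)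
      = 2 * tmRiesz n m * σ := by
    rw [intervalIntegral.integral_const_mul, hT]
  have hrefint : ∫ x in (0:ℝ)..σ, tmRiesz (n+k) (σ - x)
      = ∫ x in (0:ℝ)..σ, tmRiesz (n+k) x := by
    rw [intervalIntegral.integral_comp_sub_left (tmRiesz (n+k)) σ]
    norm_num
  have hR : ∫ x in (0:ℝ)..σ, (tmRiesz (n+k) x + tmRiesz (n+k) (σ - x))
      = 2 * ∫ x in (0:ℝ)..σ, tmRiesz (n+k) x := by
    have h2 : IntervalIntegrable (fun x => tmRiesz (n+k) (σ - x)) MeasureTheory.volume 0 σ :=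
      (hcN.comp (continuous_const.sub continuous_id)).intervalIntegrable _ _
    rw [intervalIntegral.integral_add (hcN.intervalIntegrable _ _) h2, hrefint]
    ring
  rw [hL, hR] at hmono
  linarith
end
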